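/- Let M be a subset of Euclidean space ℝ^m, let x ∈ M, and let ξ ∈ ℝ^m be a nonzero vector. Suppose M is convex at x with respect to ξ, i.e., there exists a neighborhood U of x in ℝ^m such that either every y ∈ M ∩ U satisfies ⟨y − x, ξ⟩ ≥ 0, or every y ∈ M ∩ U satisfies ⟨y − x, ξ⟩ ≤ 0. Then the second-order normal form along curves is semidefinite: either for every C² curve c : ℝ → ℝ^m with image contained in M and c(0) = x one has ⟨c''(0), ξ⟩ ≥ 0, or for every such curve one has ⟨c''(0), ξ⟩ ≤ 0. -/

import Mathlib

open RealInnerProductSpace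

/-- Second derivative test (one direction): if `f 0 = 0`, `f` is nonnegative
near `0`, `f` has derivative `f'` everywhere and `f'` has derivative `a` at `0`,
then `a ≥ 0`. -/
lemma second_deriv_nonneg_of_localMin {f f' : ℝ → ℝ} {a : ℝ}
    (hf : ∀ t, HasDerivAt f (f' t) t) (hf' : HasDerivAt f' a 0)
    (h0 : f 0 = 0) (hnn : ∀ᶠ t in nhds 0, 0 ≤ f t) : 0 ≤ a := by
  by_contra ha
  push_neg at ha
  -- f has a local min at 0, so f' 0 = 0
  have hmin : IsLocalMin f 0 := by
    filter_upwards [hnn] with t ht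
    simpa [h0] using ht
  have hf'0 : f' 0 = 0 := by
    have := hmin.deriv_eq_zero
    rwa [(hf 0).deriv] at this
  -- slope of f' tends to a < 0, so f' t < 0 for small t > 0
  have hslope := hasDerivAt_iff_tendsto_slope.mp hf'
  have hneg : ∀ᶠ t in nhdsWithin (0 : ℝ) (Set.Ioi 0), f' t < 0 := by
    have h1 : ∀ᶠ t in nhdsWithin (0 : ℝ) {(0 : ℝ)}ᶜ, slope f' 0 t < 0 :=
      hslope.eventually_lt_const ha
    have h2 : nhdsWithin (0 : ℝ) (Set.Ioi 0) ≤ nhdsWithin (0 : ℝ) {(0 : ℝ)}ᶜ :=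
      nhdsWithin_mono _ (fun t ht => ne_of_gt ht)
    filter_upwards [h2 h1, self_mem_nhdsWithin] with t ht (ht' : t ∈ Set.Ioi 0)
    have : f' t / t < 0 := by simpa [slope, hf'0, div_eq_inv_mul] using ht
    have := mul_neg_of_pos_of_neg ht' this
    rwa [mul_div_cancel₀ _ (ne_of_gt ht')] at this
  have hnn' : ∀ᶠ t in nhdsWithin (0 : ℝ) (Set.Ioi 0), 0 ≤ f t :=
    nhdsWithin_le_nhds hnn
  obtain ⟨δ, hδ, hsub⟩ := mem_nhdsGT_iff_exists_Ioc_subset.mp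
    (hneg.and hnn')
  -- f is strictly decreasing on [0, δ], contradiction
  have hanti : StrictAntiOn f (Set.Icc 0 δ) := by
    apply strictAntiOn_of_deriv_neg (convex_Icc 0 δ)
    · exact fun t _ => ((hf t).differentiableAt).continuousAt.continuousWithinAt
    · intro t ht
      rw [interior_Icc] at ht
      rw [(hf t).deriv]
      exact (hsub ⟨ht.1, le_of_lt ht.2⟩).1
  have h1 : f δ < f 0 := hanti ⟨le_refl 0, le_of_lt (Set.mem_Ioi.mp hδ)⟩
    ⟨le_of_lt (Set.mem_Ioi.mp hδ), le_refl δ⟩ (Set.mem_Ioi.mp hδ)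
  have h2 : 0 ≤ f δ := (hsub ⟨Set.mem_Ioi.mp hδ, le_refl δ⟩).2
  rw [h0] at h1
  linarith

/-- Key step: if curves into `M` stay in the nonnegative half-space locally,
then the second-order form is nonnegative. -/
lemma udriste_aux {m : ℕ} {M : Set (EuclideanSpace ℝ (Fin m))}
    {x ξ : EuclideanSpace ℝ (Fin m)} {U : Set (EuclideanSpace ℝ (Fin m))}
    (hU : U ∈ nhds x) (hpos : ∀ y ∈ M ∩ U, 0 ≤ ⟪y - x, ξ⟫)
    (c : ℝ → EuclideanSpace ℝ (Fin m)) (hc : ContDiff ℝ 2 c)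
    (hcM : ∀ t, c t ∈ M) (hc0 : c 0 = x) :
    0 ≤ ⟪iteratedDeriv 2 c 0, ξ⟫ := by
  have h2 : ContDiff ℝ (1 + 1) c := by norm_num; exact hc
  rw [contDiff_succ_iff_deriv] at h2
  obtain ⟨hdiff, -, hc1⟩ := h2
  have hdiff' : Differentiable ℝ (deriv c) := hc1.differentiable one_ne_zero
  set f : ℝ → ℝ := fun t => ⟪c t - x, ξ⟫ with hfdef
  have hfd : ∀ t, HasDerivAt f ⟪deriv c t, ξ⟫ t := by
    intro t
    have := HasDerivAt.inner ℝ ((hdiff t).hasDerivAt.sub_const x)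
      (hasDerivAt_const t ξ)
    simpa using this
  have hfd2 : HasDerivAt (fun t => ⟪deriv c t, ξ⟫) ⟪deriv (deriv c) 0, ξ⟫ 0 := by
    have := HasDerivAt.inner ℝ (hdiff' 0).hasDerivAt (hasDerivAt_const 0 ξ)
    simpa using this
  have h0 : f 0 = 0 := by simp [hfdef, hc0]
  have hnn : ∀ᶠ t in nhds 0, 0 ≤ f t := by
    have hcont : ContinuousAt c 0 := hdiff.continuous.continuousAt
    have : ∀ᶠ t in nhds (0 : ℝ), c t ∈ U := by
      apply hcont
      rwa [hc0]
    filter_upwards [this] with t ht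
    exact hpos (c t) ⟨hcM t, ht⟩
  have key := second_deriv_nonneg_of_localMin hfd hfd2 h0 hnn
  rwa [show iteratedDeriv 2 c 0 = deriv (deriv c) 0 by
    rw [iteratedDeriv_succ, iteratedDeriv_one]]

/-- Euclidean case of Theorem 1.1 (Udrişte): if `M ⊆ ℝ^m` is convex at `x`
with respect to a nonzero vector `ξ` (locally contained in one of the closed
half-spaces determined by `ξ`), then the second-order form along curves,
`c ↦ ⟪c''(0), ξ⟫`, is semidefinite. -/
theorem udriste_convex_semidefinite
    {m : ℕ} (M : Set (EuclideanSpace ℝ (Fin m)))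
    (x : EuclideanSpace ℝ (Fin m)) (hxM : x ∈ M)
    (ξ : EuclideanSpace ℝ (Fin m)) (hξ : ξ ≠ 0)
    (hconv : ∃ U ∈ nhds x,
      (∀ y ∈ M ∩ U, 0 ≤ ⟪y - x, ξ⟫) ∨ (∀ y ∈ M ∩ U, ⟪y - x, ξ⟫ ≤ 0)) :
    (∀ c : ℝ → EuclideanSpace ℝ (Fin m), ContDiff ℝ 2 c →
        (∀ t, c t ∈ M) → c 0 = x → 0 ≤ ⟪iteratedDeriv 2 c 0, ξ⟫) ∨
    (∀ c : ℝ → EuclideanSpace ℝ (Fin m), ContDiff ℝ 2 c →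
        (∀ t, c t ∈ M) → c 0 = x → ⟪iteratedDeriv 2 c 0, ξ⟫ ≤ 0) := by
  obtain ⟨U, hU, hpos | hneg⟩ := hconv
  · exact Or.inl fun c hc hcM hc0 => udriste_aux hU hpos c hc hcM hc0
  · refine Or.inr fun c hc hcM hc0 => ?_
    have hpos' : ∀ y ∈ M ∩ U, 0 ≤ ⟪y - x, -ξ⟫ := by
      intro y hy
      rw [inner_neg_right]
      linarith [hneg y hy]
    have := udriste_aux hU hpos' c hc hcM hc0
    rw [inner_neg_right] at this
    linarith
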